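/- (ℓ1-Lipschitz continuity of the value in the kernel.) For any probability vector ρ on S and any two transition kernels q, q': |V^π_q(ρ) − V^π_{q'}(ρ)| ≤ (r_max/(1−γ)²) · Σ_{s,a} Σ_{s'} |q(s'|s,a) − q'(s'|s,a)|. -/

import Mathlib

open Finset

noncomputable section

/-- `p` is a transition kernel: `p(·|s,a)` is a probability vector on `S`. -/
def IsKernel {S A : Type*} [Fintype S] (p : S → A → S → ℝ) : Prop :=
  (∀ s a s', 0 ≤ p s a s') ∧ ∀ s a, ∑ s' : S, p s a s' = 1

/-- `π` is a policy: `π(·|s)` is a probability vector on `A`. -/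
def IsPolicy {S A : Type*} [Fintype A] (π : S → A → ℝ) : Prop :=
  (∀ s a, 0 ≤ π s a) ∧ ∀ s, ∑ a : A, π s a = 1

/-- The row-stochastic matrix `P_{p,π}(s,s') = Σ_a π(a|s) p(s'|s,a)`. -/
def Pmat {S A : Type*} [Fintype A] (π : S → A → ℝ) (p : S → A → S → ℝ) :
    Matrix S S ℝ :=
  fun s s' => ∑ a : A, π s a * p s a s'

/-- `r^π(s) = Σ_a π(a|s) r(s,a)`. -/
def rpi {S A : Type*} [Fintype A] (π : S → A → ℝ) (r : S → A → ℝ) (s : S) : ℝ :=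
  ∑ a : A, π s a * r s a

/-- The value function `V^π_p(s) = Σ_t γ^t ((P_{p,π})^t r^π)(s)`. -/
def Vval {S A : Type*} [Fintype S] [DecidableEq S] [Fintype A]
    (γ : ℝ) (π : S → A → ℝ) (r : S → A → ℝ) (p : S → A → S → ℝ) (s : S) : ℝ :=
  ∑' t : ℕ, γ ^ t * ((Pmat π p ^ t).mulVec (fun s' => rpi π r s')) s

/-- The Q-function `Q^π_p(s,a) = r(s,a) + γ Σ_{s'} p(s'|s,a) V^π_p(s')`. -/
def Qval {S A : Type*} [Fintype S] [DecidableEq S] [Fintype A]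
    (γ : ℝ) (π : S → A → ℝ) (r : S → A → ℝ) (p : S → A → S → ℝ) (s : S) (a : A) : ℝ :=
  r s a + γ * ∑ s' : S, p s a s' * Vval γ π r p s'

/-- The matrix `M_{p,π}((s,a),(s',a')) = p(s'|s,a) π(a'|s')` on `S × A`. -/
def Mmat {S A : Type*} (π : S → A → ℝ) (p : S → A → S → ℝ) :
    Matrix (S × A) (S × A) ℝ :=
  fun sa s'a' => p sa.1 sa.2 s'a'.1 * π s'a'.1 s'a'.2

/-- The discounted visitation distribution
`d^π_{p,s,a}(s',a') = (1−γ) Σ_t γ^t ((M_{p,π})^t)_{(s,a),(s',a')}`. -/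
def dvis {S A : Type*} [Fintype S] [DecidableEq S] [Fintype A] [DecidableEq A]
    (γ : ℝ) (π : S → A → ℝ) (p : S → A → S → ℝ) (x y : S × A) : ℝ :=
  (1 - γ) * ∑' t : ℕ, γ ^ t * (Mmat π p ^ t) x y

/-- `d^π_{p,ρ}(s,a) = Σ_{(s₀,a₀)} ρ_{s₀} π(a₀|s₀) d^π_{p,s₀,a₀}(s,a)`. -/
def drho {S A : Type*} [Fintype S] [DecidableEq S] [Fintype A] [DecidableEq A]
    (γ : ℝ) (π : S → A → ℝ) (p : S → A → S → ℝ) (ρ : S → ℝ) (y : S × A) : ℝ :=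
  ∑ x : S × A, ρ x.1 * π x.1 x.2 * dvis γ π p x y

/-- `KL_{sa}(p,q) = Σ_{s'} p(s'|s,a) log(p(s'|s,a)/q(s'|s,a))`
(with the convention `0 log 0 = 0`, automatic since `Real.log 0 = 0`). -/
def KLsa {S A : Type*} [Fintype S] (p q : S → A → S → ℝ) (s : S) (a : A) : ℝ :=
  ∑ s' : S, p s a s' * Real.log (p s a s' / q s a s')

end


set_option linter.unusedSectionVars false
set_option maxHeartbeats 1000000

section helpers

variable {S A : Type*} [Fintype S] [DecidableEq S] [Fintype A]

lemma Pmat_nonneg {π : S → A → ℝ} {p : S → A → S → ℝ} (hp : IsKernel p) (hπ : IsPolicy π)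
    (s s' : S) : 0 ≤ Pmat π p s s' :=
  Finset.sum_nonneg fun a _ => mul_nonneg (hπ.1 s a) (hp.1 s a s')

lemma Pmat_row_sum {π : S → A → ℝ} {p : S → A → S → ℝ} (hp : IsKernel p) (hπ : IsPolicy π)
    (s : S) : ∑ s' : S, Pmat π p s s' = 1 := by
  unfold Pmat
  rw [Finset.sum_comm]
  simp_rw [← Finset.mul_sum]
  simp only [hp.2]
  simpa using hπ.2 s

lemma mulVec_abs_bound {P : Matrix S S ℝ} (hP0 : ∀ s s', 0 ≤ P s s')
    (hP1 : ∀ s, ∑ s' : S, P s s' = 1) {v : S → ℝ} {C : ℝ} (hv : ∀ s, |v s| ≤ C)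
    (s : S) : |P.mulVec v s| ≤ C := by
  have h : |P.mulVec v s| ≤ ∑ s' : S, P s s' * C := by
    rw [Matrix.mulVec, dotProduct]
    refine (Finset.abs_sum_le_sum_abs _ _).trans (Finset.sum_le_sum ?_)
    intro s' _
    rw [abs_mul, abs_of_nonneg (hP0 s s')]
    exact mul_le_mul_of_nonneg_left (hv s') (hP0 s s')
  calc |P.mulVec v s| ≤ ∑ s' : S, P s s' * C := h
    _ = C := by rw [← Finset.sum_mul, hP1 s, one_mul]

lemma pow_mulVec_abs_bound {P : Matrix S S ℝ} (hP0 : ∀ s s', 0 ≤ P s s')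
    (hP1 : ∀ s, ∑ s' : S, P s s' = 1) {v : S → ℝ} {C : ℝ} (hv : ∀ s, |v s| ≤ C)
    (t : ℕ) (s : S) : |(P ^ t).mulVec v s| ≤ C := by
  induction t generalizing s with
  | zero => simpa [Matrix.one_mulVec] using hv s
  | succ n ih =>
    rw [pow_succ', ← Matrix.mulVec_mulVec]
    exact mulVec_abs_bound hP0 hP1 ih s

lemma summable_V {γ : ℝ} (hγ0 : 0 ≤ γ) (hγ1 : γ < 1) {P : Matrix S S ℝ}
    (hP0 : ∀ s s', 0 ≤ P s s') (hP1 : ∀ s, ∑ s' : S, P s s' = 1)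
    {v : S → ℝ} {C : ℝ} (hv : ∀ s, |v s| ≤ C) (s : S) :
    Summable (fun t : ℕ => γ ^ t * ((P ^ t).mulVec v) s) := by
  refine Summable.of_norm_bounded (g := fun t => C * γ ^ t)
    ((summable_geometric_of_lt_one hγ0 hγ1).mul_left C) ?_
  intro t
  rw [Real.norm_eq_abs, abs_mul, abs_pow, abs_of_nonneg hγ0, mul_comm]
  exact mul_le_mul_of_nonneg_right (pow_mulVec_abs_bound hP0 hP1 hv t s)
    (pow_nonneg hγ0 t)

lemma abs_rpi_le {π : S → A → ℝ} (hπ : IsPolicy π) (r : S → A → ℝ) (s : S) :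
    |rpi π r s| ≤ ⨆ sa : S × A, |r sa.1 sa.2| := by
  have hb : BddAbove (Set.range fun sa : S × A => |r sa.1 sa.2|) :=
    Set.Finite.bddAbove (Set.finite_range _)
  have hr : ∀ s a, |r s a| ≤ ⨆ sa : S × A, |r sa.1 sa.2| := fun s a =>
    le_ciSup hb (s, a)
  calc |rpi π r s| ≤ ∑ a : A, |π s a * r s a| := Finset.abs_sum_le_sum_abs _ _
    _ ≤ ∑ a : A, π s a * (⨆ sa : S × A, |r sa.1 sa.2|) := by
        refine Finset.sum_le_sum fun a _ => ?_
        rw [abs_mul, abs_of_nonneg (hπ.1 s a)]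
        exact mul_le_mul_of_nonneg_left (hr s a) (hπ.1 s a)
    _ = ⨆ sa : S × A, |r sa.1 sa.2| := by rw [← Finset.sum_mul, hπ.2 s, one_mul]

lemma bellman {γ : ℝ} (hγ0 : 0 ≤ γ) (hγ1 : γ < 1) {π : S → A → ℝ} (r : S → A → ℝ)
    {p : S → A → S → ℝ} (hp : IsKernel p) (hπ : IsPolicy π) (s : S) :
    Vval γ π r p s = rpi π r s + γ * ∑ s' : S, Pmat π p s s' * Vval γ π r p s' := by
  have hC : ∀ s : S, |rpi π r s| ≤ ⨆ sa : S × A, |r sa.1 sa.2| := abs_rpi_le hπ r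
  have hP0 := Pmat_nonneg hp hπ
  have hP1 := Pmat_row_sum hp hπ
  have hsum : ∀ s : S,
      Summable (fun t : ℕ => γ ^ t * ((Pmat π p ^ t).mulVec (fun x => rpi π r x)) s) :=
    fun s => summable_V hγ0 hγ1 hP0 hP1 hC s
  unfold Vval
  rw [Summable.tsum_eq_zero_add (hsum s)]
  congr 1
  · simp [Matrix.one_mulVec]
  have key : ∀ t : ℕ, γ ^ (t + 1) * ((Pmat π p ^ (t + 1)).mulVec (fun x => rpi π r x)) s
      = γ * ∑ s' : S, Pmat π p s s' *
          (γ ^ t * ((Pmat π p ^ t).mulVec (fun x => rpi π r x)) s') := by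
    intro t
    rw [pow_succ' (Pmat π p) t, ← Matrix.mulVec_mulVec, Matrix.mulVec, dotProduct,
      pow_succ, Finset.mul_sum, Finset.mul_sum]
    exact Finset.sum_congr rfl fun s' _ => by ring
  calc (∑' t : ℕ, γ ^ (t + 1) * ((Pmat π p ^ (t + 1)).mulVec (fun x => rpi π r x)) s)
      = ∑' t : ℕ, γ * ∑ s' : S, Pmat π p s s' *
          (γ ^ t * ((Pmat π p ^ t).mulVec (fun x => rpi π r x)) s') := tsum_congr key
    _ = γ * ∑' t : ℕ, ∑ s' : S, Pmat π p s s' *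
          (γ ^ t * ((Pmat π p ^ t).mulVec (fun x => rpi π r x)) s') := tsum_mul_left
    _ = γ * ∑ s' : S, ∑' t : ℕ, Pmat π p s s' *
          (γ ^ t * ((Pmat π p ^ t).mulVec (fun x => rpi π r x)) s') := by
        rw [Summable.tsum_finsetSum (fun s' _ => (hsum s').mul_left _)]
    _ = γ * ∑ s' : S, Pmat π p s s' * Vval γ π r p s' := by
        congr 1
        exact Finset.sum_congr rfl fun s' _ => tsum_mul_left

lemma abs_Vval_le {γ : ℝ} (hγ0 : 0 ≤ γ) (hγ1 : γ < 1) {π : S → A → ℝ} (r : S → A → ℝ)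
    {p : S → A → S → ℝ} (hp : IsKernel p) (hπ : IsPolicy π) (s : S) :
    |Vval γ π r p s| ≤ (⨆ sa : S × A, |r sa.1 sa.2|) / (1 - γ) := by
  have hC : ∀ s : S, |rpi π r s| ≤ ⨆ sa : S × A, |r sa.1 sa.2| := abs_rpi_le hπ r
  have hP0 := Pmat_nonneg hp hπ
  have hP1 := Pmat_row_sum hp hπ
  set C := ⨆ sa : S × A, |r sa.1 sa.2| with hCdef
  have hsum := summable_V (v := fun x => rpi π r x) hγ0 hγ1 hP0 hP1 hC s
  have hb : ∀ t : ℕ, |γ ^ t * ((Pmat π p ^ t).mulVec (fun x => rpi π r x)) s| ≤ C * γ ^ t := by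
    intro t
    rw [abs_mul, abs_pow, abs_of_nonneg hγ0, mul_comm]
    exact mul_le_mul_of_nonneg_right (pow_mulVec_abs_bound hP0 hP1 hC t s)
      (pow_nonneg hγ0 t)
  have habs : Summable (fun t : ℕ =>
      |γ ^ t * ((Pmat π p ^ t).mulVec (fun x => rpi π r x)) s|) := hsum.abs
  calc |Vval γ π r p s|
      ≤ ∑' t : ℕ, |γ ^ t * ((Pmat π p ^ t).mulVec (fun x => rpi π r x)) s| := by
        unfold Vval
        have h1 := norm_tsum_le_tsum_norm
          (f := fun t : ℕ => γ ^ t * ((Pmat π p ^ t).mulVec (fun x => rpi π r x)) s)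
          (by simpa only [Real.norm_eq_abs] using habs)
        simpa only [Real.norm_eq_abs] using h1
    _ ≤ ∑' t : ℕ, C * γ ^ t := Summable.tsum_le_tsum hb habs
        ((summable_geometric_of_lt_one hγ0 hγ1).mul_left C)
    _ = C * (1 - γ)⁻¹ := by
        rw [tsum_mul_left, tsum_geometric_of_lt_one hγ0 hγ1]
    _ = C / (1 - γ) := by rw [div_eq_mul_inv]

end helpers

/-- ℓ¹-Lipschitz continuity of the value in the kernel:
`|V^π_q(ρ) − V^π_{q'}(ρ)| ≤ (r_max/(1−γ)²) Σ_{s,a,s'} |q(s'|s,a) − q'(s'|s,a)|`. -/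
theorem stmt14 {S A : Type*} [Fintype S] [DecidableEq S] [Fintype A] [DecidableEq A]
    [Nonempty S] [Nonempty A]
    (γ : ℝ) (hγ : γ ∈ Set.Ioo (0 : ℝ) 1) (r : S → A → ℝ)
    (π : S → A → ℝ) (hπ : IsPolicy π)
    (ρ : S → ℝ) (hρ0 : ∀ s, 0 ≤ ρ s) (hρ1 : ∑ s : S, ρ s = 1)
    (q q' : S → A → S → ℝ) (hq : IsKernel q) (hq' : IsKernel q') :
    |(∑ s : S, ρ s * Vval γ π r q s) - ∑ s : S, ρ s * Vval γ π r q' s| ≤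
      (⨆ sa : S × A, |r sa.1 sa.2|) / (1 - γ) ^ 2 *
        ∑ s : S, ∑ a : A, ∑ s' : S, |q s a s' - q' s a s'| := by
  obtain ⟨hγ0, hγ1⟩ := hγ
  have hγ0' : (0:ℝ) ≤ γ := le_of_lt hγ0
  have h1γ : (0:ℝ) < 1 - γ := by linarith
  set C := ⨆ sa : S × A, |r sa.1 sa.2| with hCdef
  have hC0 : 0 ≤ C := by
    rw [hCdef]
    exact le_trans (abs_nonneg _)
      (le_ciSup (f := fun sa : S × A => |r sa.1 sa.2|)
        (Set.Finite.bddAbove (Set.finite_range _)) (Classical.arbitrary (S × A)))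
  set ε := ∑ s : S, ∑ a : A, ∑ s' : S, |q s a s' - q' s a s'| with hεdef
  have hε0 : 0 ≤ ε := Finset.sum_nonneg fun _ _ => Finset.sum_nonneg fun _ _ =>
    Finset.sum_nonneg fun _ _ => abs_nonneg _
  set V := Vval γ π r q with hV
  set V' := Vval γ π r q' with hV'
  have hVb : ∀ s, |V' s| ≤ C / (1 - γ) := fun s => abs_Vval_le hγ0' hγ1 r hq' hπ s
  have hVbnn : 0 ≤ C / (1 - γ) := div_nonneg hC0 h1γ.le
  obtain ⟨s₀, hs₀⟩ := Finite.exists_max (fun s : S => |V s - V' s|)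
  set D := |V s₀ - V' s₀| with hD
  have hD0 : 0 ≤ D := abs_nonneg _
  have hπle1 : ∀ s a, π s a ≤ 1 := by
    intro s a
    calc π s a ≤ ∑ a' : A, π s a' :=
          Finset.single_le_sum (fun a' _ => hπ.1 s a') (Finset.mem_univ a)
      _ = 1 := hπ.2 s
  have hrow : ∑ s' : S, |Pmat π q s₀ s' - Pmat π q' s₀ s'| ≤ ε := by
    have h1 : ∀ s' : S, |Pmat π q s₀ s' - Pmat π q' s₀ s'| ≤
        ∑ a : A, |q s₀ a s' - q' s₀ a s'| := by
      intro s'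
      unfold Pmat
      rw [← Finset.sum_sub_distrib]
      refine (Finset.abs_sum_le_sum_abs _ _).trans (Finset.sum_le_sum fun a _ => ?_)
      rw [← mul_sub, abs_mul, abs_of_nonneg (hπ.1 s₀ a)]
      exact mul_le_of_le_one_left (abs_nonneg _) (hπle1 s₀ a)
    calc ∑ s' : S, |Pmat π q s₀ s' - Pmat π q' s₀ s'|
        ≤ ∑ s' : S, ∑ a : A, |q s₀ a s' - q' s₀ a s'| :=
          Finset.sum_le_sum fun s' _ => h1 s'
      _ = ∑ a : A, ∑ s' : S, |q s₀ a s' - q' s₀ a s'| := Finset.sum_comm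
      _ ≤ ε := by
          rw [hεdef]
          exact Finset.single_le_sum
            (f := fun s => ∑ a : A, ∑ s' : S, |q s a s' - q' s a s'|)
            (fun s _ => Finset.sum_nonneg fun _ _ => Finset.sum_nonneg fun _ _ => abs_nonneg _)
            (Finset.mem_univ s₀)
  have hbell := bellman hγ0' hγ1 r hq hπ s₀
  have hbell' := bellman hγ0' hγ1 r hq' hπ s₀
  rw [← hV] at hbell
  rw [← hV'] at hbell'
  have hdiff : V s₀ - V' s₀ = γ * ∑ s' : S,
      (Pmat π q s₀ s' * (V s' - V' s') + (Pmat π q s₀ s' - Pmat π q' s₀ s') * V' s') := by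
    have hcomb : ∑ s' : S,
        (Pmat π q s₀ s' * (V s' - V' s') + (Pmat π q s₀ s' - Pmat π q' s₀ s') * V' s')
        = (∑ s' : S, Pmat π q s₀ s' * V s') - ∑ s' : S, Pmat π q' s₀ s' * V' s' := by
      rw [← Finset.sum_sub_distrib]
      exact Finset.sum_congr rfl fun s' _ => by ring
    rw [hcomb, hbell, hbell']
    ring
  have hstep : D ≤ γ * (D + C / (1 - γ) * ε) := by
    have hDeq : D = γ * |∑ s' : S, (Pmat π q s₀ s' * (V s' - V' s')
        + (Pmat π q s₀ s' - Pmat π q' s₀ s') * V' s')| := by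
      rw [hD, hdiff, abs_mul, abs_of_nonneg hγ0']
    have hDge : |V s₀ - V' s₀| ≤ D := hs₀ s₀
    have hb : |∑ s' : S, (Pmat π q s₀ s' * (V s' - V' s')
            + (Pmat π q s₀ s' - Pmat π q' s₀ s') * V' s')| ≤ D + C / (1 - γ) * ε := calc
      |∑ s' : S, (Pmat π q s₀ s' * (V s' - V' s')
            + (Pmat π q s₀ s' - Pmat π q' s₀ s') * V' s')|
        ≤ ∑ s' : S, (Pmat π q s₀ s' * D
            + |Pmat π q s₀ s' - Pmat π q' s₀ s'| * (C / (1 - γ))) := by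
          refine (Finset.abs_sum_le_sum_abs _ _).trans (Finset.sum_le_sum fun s' _ => ?_)
          refine (abs_add_le _ _).trans (add_le_add ?_ ?_)
          · rw [abs_mul, abs_of_nonneg (Pmat_nonneg hq hπ s₀ s')]
            exact mul_le_mul_of_nonneg_left ((hs₀ s').trans hDge) (Pmat_nonneg hq hπ s₀ s')
          · rw [abs_mul]
            exact mul_le_mul_of_nonneg_left (hVb s') (abs_nonneg _)
      _ = D * (∑ s' : S, Pmat π q s₀ s')
            + (C / (1 - γ)) * ∑ s' : S, |Pmat π q s₀ s' - Pmat π q' s₀ s'| := by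
          rw [Finset.sum_add_distrib, Finset.mul_sum, Finset.mul_sum]
          congr 1
          · exact Finset.sum_congr rfl fun s' _ => by ring
          · exact Finset.sum_congr rfl fun s' _ => by ring
      _ ≤ D + C / (1 - γ) * ε := by
          rw [Pmat_row_sum hq hπ s₀, mul_one]
          exact add_le_add (le_refl D) (mul_le_mul_of_nonneg_left hrow hVbnn)
    calc D = γ * |∑ s' : S, (Pmat π q s₀ s' * (V s' - V' s')
            + (Pmat π q s₀ s' - Pmat π q' s₀ s') * V' s')| := hDeq
      _ ≤ γ * (D + C / (1 - γ) * ε) := mul_le_mul_of_nonneg_left hb hγ0'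
  have hkey : D ≤ C / (1 - γ) ^ 2 * ε := by
    have h2 : D * (1 - γ) ≤ C / (1 - γ) * ε := by
      nlinarith [mul_nonneg hVbnn hε0]
    have h3 : D ≤ C / (1 - γ) * ε / (1 - γ) := (le_div_iff₀ h1γ).mpr h2
    calc D ≤ C / (1 - γ) * ε / (1 - γ) := h3
      _ = C / (1 - γ) ^ 2 * ε := by
          rw [div_mul_eq_mul_div, div_div, ← sq, div_mul_eq_mul_div]
  calc |(∑ s : S, ρ s * V s) - ∑ s : S, ρ s * V' s|
      = |∑ s : S, ρ s * (V s - V' s)| := by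
        rw [← Finset.sum_sub_distrib]
        congr 1
        exact Finset.sum_congr rfl fun s _ => by ring
    _ ≤ ∑ s : S, ρ s * D := by
        refine (Finset.abs_sum_le_sum_abs _ _).trans (Finset.sum_le_sum fun s _ => ?_)
        rw [abs_mul, abs_of_nonneg (hρ0 s)]
        exact mul_le_mul_of_nonneg_left (hs₀ s) (hρ0 s)
    _ = D := by rw [← Finset.sum_mul, hρ1, one_mul]
    _ ≤ C / (1 - γ) ^ 2 * ε := hkey
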